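/- arXiv:2405.19051 — 3 statements merged into one kernel-verified Lean document; each statement's English description precedes it below -/
import Mathlib

section
/- Under the Hilbert space isomorphism Γ: (ℂ²)^⊗n → Λ(ℂψ₁ ⊕ ⋯ ⊕ ℂψₙ) sending |a₁⋯aₙ⟩ to ψ₁^{a₁} ∧ ⋯ ∧ ψₙ^{aₙ} (where ψ⁰ = 1, ψ¹ = ψ), the following operator identities hold for 1 ≤ i ≤ n: ψᵢ + ψᵢ* = Z₁⋯Z_{i−1}Xᵢ, ψᵢ*ψᵢ − ψᵢψᵢ* = Zᵢ, and ψᵢ − ψᵢ* = −Z₁⋯ZᵢXᵢ. -/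
open Matrix

/-- Basis index for the exterior algebra `Λ(ℂψ₁ ⊕ ⋯ ⊕ ℂψₙ)`: a subset `S ⊆ {1,…,n}`
indexes the wedge product of the `ψᵢ` for `i ∈ S` in increasing order. -/
abbrev ExtIdx (n : ℕ) := Finset (Fin n)

/-- The Koszul sign `(-1)^{|{j ∈ S : j < i}|}`. -/
noncomputable def ksgn (n : ℕ) (i : Fin n) (S : ExtIdx n) : ℂ :=
  (-1 : ℂ) ^ (S.filter (fun j => j < i)).card

/-- The wedge (creation) operator `ψᵢ ∧ (−)` in the orthonormal wedge basis. -/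
noncomputable def wedgeOp (n : ℕ) (i : Fin n) : Matrix (ExtIdx n) (ExtIdx n) ℂ :=
  fun S T => if i ∈ S ∧ T = S.erase i then ksgn n i T else 0

/-- The contraction (annihilation) operator `(ψᵢ)* ⌟ (−)` in the orthonormal wedge basis. -/
noncomputable def contrOp (n : ℕ) (i : Fin n) : Matrix (ExtIdx n) (ExtIdx n) ℂ :=
  fun S T => if i ∉ S ∧ T = insert i S then ksgn n i S else 0

/-- The state space of `n` qubits: functions from qubit indices to basis labels. -/
abbrev QIdx (n : ℕ) := Fin n → Fin 2

/-- The Pauli X operator acting on the `i`-th qubit of `(ℂ²)^⊗n`. -/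
noncomputable def Xop (n : ℕ) (i : Fin n) : Matrix (QIdx n) (QIdx n) ℂ :=
  fun a b => if b = Function.update a i (a i + 1) then 1 else 0

/-- The Pauli Z operator acting on the `i`-th qubit of `(ℂ²)^⊗n`. -/
noncomputable def Zop (n : ℕ) (i : Fin n) : Matrix (QIdx n) (QIdx n) ℂ :=
  fun a b => if a = b then (-1 : ℂ) ^ (a i : ℕ) else 0

/-- `|+⟩` and `|−⟩` as states of a single tensor factor: `pm 0 = |+⟩`, `pm 1 = |−⟩`. -/
noncomputable def pm (s : Fin 2) (x : Fin 2) : ℂ :=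
  (Real.sqrt 2 : ℂ)⁻¹ * (-1 : ℂ) ^ ((s : ℕ) * (x : ℕ))

/-- The product state `|s₁ ⋯ sₙ⟩` with each `sᵢ ∈ {+,−}`. -/
noncomputable def pmKet (n : ℕ) (s : Fin n → Fin 2) : QIdx n → ℂ :=
  fun a => ∏ i, pm (s i) (a i)

/-- The Jordan–Wigner identification on basis indices: a bit string `a` corresponds to
the subset `{i : a i = 1}`, i.e. `Γ|a₁⋯aₙ⟩ = ψ₁^{a₁} ∧ ⋯ ∧ ψₙ^{aₙ}`. -/
noncomputable def jw (n : ℕ) (a : QIdx n) : ExtIdx n :=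
  Finset.univ.filter (fun i => a i = 1)

/-- The product `Z₁ ⋯ Z_k` of Pauli Z operators on the qubits `j` with `(j : ℕ) < k`. -/
noncomputable def Zpre (n : ℕ) (k : ℕ) : Matrix (QIdx n) (QIdx n) ℂ :=
  (((List.finRange n).filter (fun j : Fin n => (j : ℕ) < k)).map (Zop n)).prod

lemma mem_jw {n : ℕ} {a : QIdx n} {i : Fin n} : i ∈ jw n a ↔ a i = 1 := by simp [jw]

lemma jw_injective (n : ℕ) : Function.Injective (jw n) := by
  intro a b h
  funext j
  have h1 : (a j = 1) ↔ (b j = 1) := by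
    rw [← mem_jw (a := a), ← mem_jw (a := b), h]
  have key : ∀ x y : Fin 2, ((x = 1) ↔ (y = 1)) → x = y := by decide
  exact key _ _ h1

lemma jw_update_zero {n : ℕ} (a : QIdx n) (i : Fin n) :
    jw n (Function.update a i 0) = (jw n a).erase i := by
  ext j
  by_cases h : j = i <;> simp [jw, Function.update, h]

lemma jw_update_one {n : ℕ} (a : QIdx n) (i : Fin n) :
    jw n (Function.update a i 1) = insert i (jw n a) := by
  ext j
  by_cases h : j = i <;> simp [jw, Function.update, h]

lemma ksgn_erase {n : ℕ} (i : Fin n) (S : ExtIdx n) :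
    ksgn n i (S.erase i) = ksgn n i S := by
  unfold ksgn
  congr 1
  congr 1
  ext j
  simp only [Finset.mem_filter, Finset.mem_erase]
  constructor
  · rintro ⟨⟨_, hj⟩, hlt⟩; exact ⟨hj, hlt⟩
  · rintro ⟨hj, hlt⟩; exact ⟨⟨fun h => absurd (h ▸ hlt) (lt_irrefl i), hj⟩, hlt⟩

lemma ksgn_sq {n : ℕ} (i : Fin n) (S : ExtIdx n) : ksgn n i S * ksgn n i S = 1 := by
  unfold ksgn
  rw [← pow_add, ← two_mul, pow_mul]
  norm_num

lemma ksgn_jw {n : ℕ} (i : Fin n) (a : QIdx n) :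
    ksgn n i (jw n a) =
      (-1 : ℂ) ^ (∑ j ∈ Finset.univ.filter (fun j : Fin n => (j : ℕ) < (i : ℕ)), (a j : ℕ)) := by
  unfold ksgn
  congr 1
  have h1 : (jw n a).filter (fun j => j < i)
      = (Finset.univ.filter (fun j : Fin n => (j : ℕ) < (i : ℕ))).filter (fun j => a j = 1) := by
    ext j
    simp only [Finset.mem_filter, Finset.mem_univ, true_and, jw, Fin.lt_def]
    tauto
  rw [h1, Finset.card_filter]
  apply Finset.sum_congr rfl
  intro j _
  have : ∀ x : Fin 2, (if x = 1 then 1 else 0) = (x : ℕ) := by decide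
  exact this (a j)

lemma Zop_diag (n : ℕ) (j : Fin n) :
    Zop n j = Matrix.diagonal (fun a : QIdx n => (-1 : ℂ) ^ (a j : ℕ)) := by
  ext a b
  simp [Zop, Matrix.diagonal]

lemma listZ (n : ℕ) (l : List (Fin n)) :
    (l.map (Zop n)).prod
      = Matrix.diagonal (fun a : QIdx n => (-1 : ℂ) ^ ((l.map (fun j => (a j : ℕ))).sum)) := by
  induction l with
  | nil => simp
  | cons j t ih =>
      simp only [List.map_cons, List.prod_cons, ih, Zop_diag, Matrix.diagonal_mul_diagonal,
        List.sum_cons, pow_add]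

lemma Zpre_diag (n : ℕ) (k : ℕ) :
    Zpre n k = Matrix.diagonal (fun a : QIdx n =>
      (-1 : ℂ) ^ (∑ j ∈ Finset.univ.filter (fun j : Fin n => (j : ℕ) < k), (a j : ℕ))) := by
  have key : ∀ a : QIdx n,
      ((((List.finRange n).filter (fun j : Fin n => (j : ℕ) < k)).map (fun j => (a j : ℕ))).sum)
        = ∑ j ∈ Finset.univ.filter (fun j : Fin n => (j : ℕ) < k), (a j : ℕ) := by
    intro a
    rw [Finset.sum_filter, Fin.sum_univ_def]
    induction (List.finRange n) with
    | nil => simp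
    | cons j t ih =>
        by_cases h : (j : ℕ) < k <;> simp [h, List.filter_cons, ih]
  rw [Zpre, listZ]
  ext a b
  rw [Matrix.diagonal_apply, Matrix.diagonal_apply, key a]

lemma contr_mul_wedge (n : ℕ) (i : Fin n) (S U : ExtIdx n) :
    (contrOp n i * wedgeOp n i) S U = if i ∉ S ∧ U = S then 1 else 0 := by
  rw [Matrix.mul_apply]
  by_cases hi : i ∈ S
  · rw [Finset.sum_eq_zero, if_neg (by tauto)]
    intro T _
    simp only [contrOp]
    rw [if_neg (by tauto), zero_mul]
  · rw [Finset.sum_eq_single (insert i S)]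
    · simp only [contrOp, wedgeOp]
      rw [Finset.erase_insert hi]
      by_cases hU : U = S
      · simp [hU, hi, ksgn_sq i S]
      · simp [hU, hi]
    · intro T _ hT
      simp only [contrOp]
      rw [if_neg (fun h => hT h.2), zero_mul]
    · intro h; exact absurd (Finset.mem_univ _) h

lemma wedge_mul_contr (n : ℕ) (i : Fin n) (S U : ExtIdx n) :
    (wedgeOp n i * contrOp n i) S U = if i ∈ S ∧ U = S then 1 else 0 := by
  rw [Matrix.mul_apply]
  by_cases hi : i ∈ S
  · rw [Finset.sum_eq_single (S.erase i)]
    · simp only [wedgeOp, contrOp]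
      rw [Finset.insert_erase hi]
      by_cases hU : U = S
      · simp [hU, hi, Finset.notMem_erase, ksgn_sq i (S.erase i)]
      · simp [hU, hi]
    · intro T _ hT
      simp only [wedgeOp]
      rw [if_neg (fun h => hT h.2), zero_mul]
    · intro h; exact absurd (Finset.mem_univ _) h
  · rw [Finset.sum_eq_zero, if_neg (by tauto)]
    intro T _
    simp only [wedgeOp]
    rw [if_neg (by tauto), zero_mul]

lemma sum_lt_succ (n : ℕ) (i : Fin n) (a : QIdx n) :
    ∑ j ∈ Finset.univ.filter (fun j : Fin n => (j : ℕ) < (i : ℕ) + 1), (a j : ℕ)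
      = (∑ j ∈ Finset.univ.filter (fun j : Fin n => (j : ℕ) < (i : ℕ)), (a j : ℕ)) + (a i : ℕ) := by
  have h : Finset.univ.filter (fun j : Fin n => (j : ℕ) < (i : ℕ) + 1)
      = insert i (Finset.univ.filter (fun j : Fin n => (j : ℕ) < (i : ℕ))) := by
    ext j
    simp only [Finset.mem_filter, Finset.mem_univ, true_and, Finset.mem_insert]
    constructor
    · intro hj
      rcases Nat.lt_succ_iff_lt_or_eq.mp hj with h | h
      · exact Or.inr h
      · exact Or.inl (Fin.ext h)
    · rintro (rfl | h) <;> omega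
  rw [h, Finset.sum_insert (by simp), add_comm]

theorem jordan_wigner (n : ℕ) (i : Fin n) :
    (wedgeOp n i + contrOp n i).submatrix (jw n) (jw n)
        = Zpre n i * Xop n i ∧
    (contrOp n i * wedgeOp n i - wedgeOp n i * contrOp n i).submatrix (jw n) (jw n)
        = Zop n i ∧
    (wedgeOp n i - contrOp n i).submatrix (jw n) (jw n)
        = -(Zpre n (i + 1) * Xop n i) := by
  have hone : ∀ x : Fin 2, x ≠ 1 → x = 0 := by decide
  refine ⟨?_, ?_, ?_⟩
  · ext a b
    rw [Matrix.submatrix_apply, Matrix.add_apply, Zpre_diag, Matrix.diagonal_mul]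
    simp only [wedgeOp, contrOp, Xop]
    by_cases hai : a i = 1
    · have hij : i ∈ jw n a := mem_jw.mpr hai
      have hupd : Function.update a i (a i + 1) = Function.update a i 0 := by
        rw [hai]; rfl
      have hc : ¬(i ∉ jw n a ∧ jw n b = insert i (jw n a)) := fun h => h.1 hij
      rw [hupd, if_neg hc, add_zero]
      by_cases hb : b = Function.update a i 0
      · have hjb : jw n b = (jw n a).erase i := by rw [hb, jw_update_zero]
        rw [if_pos ⟨hij, hjb⟩, if_pos hb, mul_one, hjb, ksgn_erase, ksgn_jw]
      · have hjb : jw n b ≠ (jw n a).erase i := by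
          rw [← jw_update_zero]
          exact fun h => hb (jw_injective n h)
        have hw : ¬(i ∈ jw n a ∧ jw n b = (jw n a).erase i) := fun h => hjb h.2
        rw [if_neg hw, if_neg hb, mul_zero]
    · have ha0 : a i = 0 := hone _ hai
      have hij : i ∉ jw n a := fun h => hai (mem_jw.mp h)
      have hupd : Function.update a i (a i + 1) = Function.update a i 1 := by
        rw [ha0]; rfl
      have hw : ¬(i ∈ jw n a ∧ jw n b = (jw n a).erase i) := fun h => hij h.1
      rw [hupd, if_neg hw, zero_add]
      by_cases hb : b = Function.update a i 1
      · have hjb : jw n b = insert i (jw n a) := by rw [hb, jw_update_one]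
        rw [if_pos ⟨hij, hjb⟩, if_pos hb, mul_one, ksgn_jw]
      · have hjb : jw n b ≠ insert i (jw n a) := by
          rw [← jw_update_one]
          exact fun h => hb (jw_injective n h)
        have hc : ¬(i ∉ jw n a ∧ jw n b = insert i (jw n a)) := fun h => hjb h.2
        rw [if_neg hc, if_neg hb, mul_zero]
  · ext a b
    rw [Matrix.submatrix_apply, Matrix.sub_apply, contr_mul_wedge, wedge_mul_contr]
    simp only [Zop]
    by_cases hab : a = b
    · subst hab
      by_cases hai : a i = 1
      · have hij : i ∈ jw n a := mem_jw.mpr hai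
        have hc : ¬(i ∉ jw n a ∧ jw n a = jw n a) := fun h => h.1 hij
        rw [if_neg hc, if_pos ⟨hij, rfl⟩, if_pos rfl, hai]
        norm_num
      · have ha0 : a i = 0 := hone _ hai
        have hij : i ∉ jw n a := fun h => hai (mem_jw.mp h)
        have hw : ¬(i ∈ jw n a ∧ jw n a = jw n a) := fun h => hij h.1
        rw [if_pos ⟨hij, rfl⟩, if_neg hw, if_pos rfl, ha0]
        norm_num
    · have hjab : jw n b ≠ jw n a := fun h => hab ((jw_injective n h).symm)
      have h1 : ¬(i ∉ jw n a ∧ jw n b = jw n a) := fun h => hjab h.2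
      have h2 : ¬(i ∈ jw n a ∧ jw n b = jw n a) := fun h => hjab h.2
      rw [if_neg h1, if_neg h2, if_neg hab, sub_zero]
  · ext a b
    rw [Matrix.submatrix_apply, Matrix.sub_apply, Matrix.neg_apply, Zpre_diag,
      Matrix.diagonal_mul, sum_lt_succ, pow_add]
    simp only [wedgeOp, contrOp, Xop]
    by_cases hai : a i = 1
    · have hij : i ∈ jw n a := mem_jw.mpr hai
      have hupd : Function.update a i (a i + 1) = Function.update a i 0 := by
        rw [hai]; rfl
      have hc : ¬(i ∉ jw n a ∧ jw n b = insert i (jw n a)) := fun h => h.1 hij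
      rw [hupd, if_neg hc, sub_zero]
      by_cases hb : b = Function.update a i 0
      · have hjb : jw n b = (jw n a).erase i := by rw [hb, jw_update_zero]
        rw [if_pos ⟨hij, hjb⟩, if_pos hb, mul_one, hjb, ksgn_erase, ksgn_jw, hai]
        norm_num
      · have hjb : jw n b ≠ (jw n a).erase i := by
          rw [← jw_update_zero]
          exact fun h => hb (jw_injective n h)
        have hw : ¬(i ∈ jw n a ∧ jw n b = (jw n a).erase i) := fun h => hjb h.2
        rw [if_neg hw, if_neg hb, mul_zero, neg_zero]
    · have ha0 : a i = 0 := hone _ hai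
      have hij : i ∉ jw n a := fun h => hai (mem_jw.mp h)
      have hupd : Function.update a i (a i + 1) = Function.update a i 1 := by
        rw [ha0]; rfl
      have hw : ¬(i ∈ jw n a ∧ jw n b = (jw n a).erase i) := fun h => hij h.1
      rw [hupd, if_neg hw, zero_sub]
      by_cases hb : b = Function.update a i 1
      · have hjb : jw n b = insert i (jw n a) := by rw [hb, jw_update_one]
        rw [if_pos ⟨hij, hjb⟩, if_pos hb, mul_one, ksgn_jw, ha0]
        norm_num
      · have hjb : jw n b ≠ insert i (jw n a) := by
          rw [← jw_update_one]
          exact fun h => hb (jw_injective n h)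
        have hc : ¬(i ∉ jw n a ∧ jw n b = insert i (jw n a)) := fun h => hjb h.2
        rw [if_neg hc, if_neg hb, mul_zero, neg_zero]
end

section
/- If S is a stabiliser subgroup of the Pauli group Gₘ generated by n independent commuting self-adjoint elements (with −1 ∉ S) acting on (ℂ²)^⊗m, then the codespace, i.e. the joint +1-eigenspace of S, has dimension 2^{m−n}. -/
open Matrix

/-- The Pauli Y operator `Y = iXZ` acting on the `i`-th qubit. -/
noncomputable def Yop (n : ℕ) (i : Fin n) : Matrix (QIdx n) (QIdx n) ℂ :=
  Complex.I • (Xop n i * Zop n i)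

/-- Generators of the Pauli group: `−1`, `i`, and the single-qubit Pauli operators. -/
noncomputable def pauliGens (n : ℕ) : Set (Matrix (QIdx n) (QIdx n) ℂ)ˣ :=
  {u | (u : Matrix (QIdx n) (QIdx n) ℂ) = -1 ∨
       (u : Matrix (QIdx n) (QIdx n) ℂ) = Complex.I • (1 : Matrix (QIdx n) (QIdx n) ℂ) ∨
       ∃ i : Fin n, (u : Matrix (QIdx n) (QIdx n) ℂ) = Xop n i ∨
         (u : Matrix (QIdx n) (QIdx n) ℂ) = Yop n i ∨
         (u : Matrix (QIdx n) (QIdx n) ℂ) = Zop n i}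

/-- The Pauli group on `n` qubits. -/
noncomputable def PauliGroup (n : ℕ) : Subgroup (Matrix (QIdx n) (QIdx n) ℂ)ˣ :=
  Subgroup.closure (pauliGens n)

namespace Stab
variable {m : ℕ}

def dotp (a b : QIdx m) : ℕ := ∑ i, (a i : ℕ) * (b i : ℕ)

lemma pm_one_case (p q r : Fin 2) :
    (-1:ℂ) ^ ((p:ℕ) * ((q + r : Fin 2) : ℕ)) =
      (-1:ℂ) ^ ((p:ℕ) * (q:ℕ)) * (-1:ℂ) ^ ((p:ℕ) * (r:ℕ)) := by
  fin_cases p <;> fin_cases q <;> fin_cases r <;> norm_num [show ((2:Fin 2):ℕ) = 0 from rfl, show ((1 + 1 : Fin 2) : ℕ) = 0 from rfl]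

lemma negpow_dotp (b y : QIdx m) :
    (-1:ℂ)^(dotp b y) = ∏ i, (-1:ℂ)^((b i:ℕ)*(y i:ℕ)) :=
  (Finset.prod_pow_eq_pow_sum _ _ _).symm

lemma dotp_comm (a b : QIdx m) : dotp a b = dotp b a := by
  simp [dotp, mul_comm]

lemma dotp_add_right (b x a : QIdx m) :
    (-1:ℂ)^(dotp b (x+a)) = (-1:ℂ)^(dotp b x) * (-1:ℂ)^(dotp b a) := by
  rw [negpow_dotp, negpow_dotp, negpow_dotp, ← Finset.prod_mul_distrib]
  exact Finset.prod_congr rfl fun i _ => pm_one_case _ _ _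

lemma dotp_add_left (b b' y : QIdx m) :
    (-1:ℂ)^(dotp (b+b') y) = (-1:ℂ)^(dotp b y) * (-1:ℂ)^(dotp b' y) := by
  rw [dotp_comm, dotp_add_right, dotp_comm y b, dotp_comm y b']

end Stab

namespace Stab
variable {m : ℕ}

noncomputable def W (a b : QIdx m) : Matrix (QIdx m) (QIdx m) ℂ :=
  Matrix.of fun x y => if y = x + a then (-1:ℂ) ^ dotp b y else 0

lemma neg_one_pow_sq (k : ℕ) : (-1:ℂ)^k * (-1:ℂ)^k = 1 := by
  rw [← pow_add]; exact Even.neg_one_pow ⟨_, rfl⟩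

lemma W_mul (a b a' b' : QIdx m) :
    W a b * W a' b' = ((-1:ℂ)^(dotp b a')) • W (a+a') (b+b') := by
  ext x z
  simp only [Matrix.mul_apply, W, Matrix.of_apply, Matrix.smul_apply, smul_eq_mul,
    ite_mul, zero_mul]
  rw [Finset.sum_ite_eq' Finset.univ (x+a)
    (fun y => (-1:ℂ)^(dotp b y) * if z = y + a' then (-1:ℂ)^(dotp b' z) else 0)]
  simp only [Finset.mem_univ, if_true, add_assoc]
  by_cases h : z = x + (a + a')
  · subst h
    simp only [if_pos rfl, mul_ite, mul_zero]
    rw [dotp_add_right b x a, dotp_add_left, dotp_add_right b x (a+a'), dotp_add_right b a a']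
    simp only [if_true]
    have h2 := neg_one_pow_sq (dotp b a')
    ring_nf
    ring_nf at h2
    rw [h2, mul_one]
  · simp [h]

end Stab

namespace Stab
variable {m : ℕ}

def delta (i : Fin m) : QIdx m := fun j => if j = i then 1 else 0

lemma dotp_delta (b : QIdx m) (i : Fin m) : dotp b (delta i) = (b i : ℕ) := by
  unfold dotp delta
  rw [Finset.sum_eq_single i]
  · simp
  · intro j _ hj; simp [hj]
  · simp

lemma dotp_zero_right (b : QIdx m) : dotp b 0 = 0 := by simp [dotp]
lemma dotp_zero_left (b : QIdx m) : dotp 0 b = 0 := by simp [dotp]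

lemma W_zero_zero : (W (0 : QIdx m) 0) = 1 := by
  ext x y
  simp [W, dotp_zero_left, Matrix.one_apply, eq_comm]

lemma trace_W_left_ne {a b : QIdx m} (ha : a ≠ 0) : (W a b).trace = 0 := by
  unfold Matrix.trace W
  apply Finset.sum_eq_zero
  intro x _
  simp only [Matrix.diag_apply, Matrix.of_apply, left_eq_add]
  simp [ha]

lemma trace_W_right_ne {b : QIdx m} (hb : b ≠ 0) : (W (0 : QIdx m) b).trace = 0 := by
  have hdiag : (W (0 : QIdx m) b).trace = ∑ x : QIdx m, (-1:ℂ)^(dotp b x) := by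
    unfold Matrix.trace W
    apply Finset.sum_congr rfl
    intro x _
    simp [Matrix.diag_apply]
  obtain ⟨i0, hi0⟩ : ∃ i, b i ≠ 0 := by
    by_contra h
    push_neg at h
    exact hb (funext h)
  have hbv : (b i0 : ℕ) = 1 := by
    have h1 : (b i0 : ℕ) < 2 := (b i0).isLt
    have h2 : (b i0 : ℕ) ≠ 0 := fun h => hi0 (Fin.ext h)
    omega
  have hδ : dotp b (delta i0) = 1 := by rw [dotp_delta, hbv]
  set S := ∑ x : QIdx m, (-1:ℂ)^(dotp b x) with hS
  have hneg : S = -S := by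
    calc S = ∑ x : QIdx m, (-1:ℂ)^(dotp b (x + delta i0)) :=
          (Fintype.sum_equiv (Equiv.addRight (delta i0))
            (fun x => (-1:ℂ)^(dotp b (x + delta i0))) (fun x => (-1:ℂ)^(dotp b x))
            (fun x => rfl)).symm
      _ = ∑ x : QIdx m, -(-1:ℂ)^(dotp b x) := by
          apply Finset.sum_congr rfl
          intro x _
          rw [dotp_add_right, hδ]
          ring
      _ = -S := by rw [Finset.sum_neg_distrib]
  rw [hdiag]
  linear_combination hneg / 2

lemma trace_one' : (1 : Matrix (QIdx m) (QIdx m) ℂ).trace = (2:ℂ)^m := by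
  rw [Matrix.trace_one]
  simp [Fintype.card_fun]

end Stab


namespace Stab
variable {m : ℕ}

lemma dotp_delta_left (i : Fin m) (b : QIdx m) : dotp (delta i) b = (b i : ℕ) := by
  rw [dotp_comm, dotp_delta]

lemma add_self_q (a : QIdx m) : a + a = 0 := by
  funext j
  have : ∀ p : Fin 2, p + p = 0 := by decide
  exact this (a j)

lemma Xop_eq (i : Fin m) : Xop m i = W (delta i) 0 := by
  ext x y
  have h : Function.update x i (x i + 1) = x + delta i := by
    funext j
    by_cases hj : j = i
    · subst hj; simp [delta]
    · simp [Function.update, hj, delta]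
  simp only [Xop, W, Matrix.of_apply, dotp_zero_left, pow_zero, h]

lemma Zop_eq (i : Fin m) : Zop m i = W 0 (delta i) := by
  ext x y
  simp only [Zop, W, Matrix.of_apply, add_zero]
  by_cases h : x = y
  · subst h; simp [dotp_delta_left]
  · simp [h, Ne.symm h]

lemma Yop_eq (i : Fin m) : Yop m i = Complex.I ^ 1 • W (delta i) (delta i) := by
  rw [Yop, Xop_eq, Zop_eq, W_mul, dotp_zero_left, pow_zero, one_smul, pow_one, add_zero, zero_add]

noncomputable def PW (m : ℕ) : Subgroup (Matrix (QIdx m) (QIdx m) ℂ)ˣ where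
  carrier := {u | ∃ (k : ℕ) (a b : QIdx m),
    (u : Matrix (QIdx m) (QIdx m) ℂ) = Complex.I ^ k • W a b}
  one_mem' := ⟨0, 0, 0, by simp [W_zero_zero]⟩
  mul_mem' := by
    rintro u v ⟨k, a, b, hu⟩ ⟨l, a', b', hv⟩
    refine ⟨k + l + 2 * dotp b a', a + a', b + b', ?_⟩
    rw [Units.val_mul, hu, hv, smul_mul_smul_comm, W_mul, smul_smul]
    congr 1
    rw [pow_add, pow_add, pow_mul, Complex.I_sq]
  inv_mem' := by
    rintro u ⟨k, a, b, hu⟩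
    set K := 2 * k + 2 * dotp b a with hK
    have hsq : (u : Matrix (QIdx m) (QIdx m) ℂ) * u = Complex.I ^ K • 1 := by
      rw [hu, smul_mul_smul_comm, W_mul, add_self_q, add_self_q, W_zero_zero, smul_smul]
      congr 1
      have h5 : Complex.I ^ (k + k + 2 * dotp b a)
          = Complex.I ^ k * Complex.I ^ k * (-1:ℂ) ^ dotp b a := by
        rw [pow_add, pow_add, pow_mul, Complex.I_sq]
      rw [hK, show 2 * k + 2 * dotp b a = k + k + 2 * dotp b a by ring, h5]
    have h4 : Complex.I ^ (4 * K) = 1 := by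
      rw [pow_mul]
      norm_num [Complex.I_pow_four]
    have hmul : (u : Matrix (QIdx m) (QIdx m) ℂ) * (Complex.I ^ (3 * K + k) • W a b) = 1 := by
      calc (u : Matrix (QIdx m) (QIdx m) ℂ) * (Complex.I ^ (3 * K + k) • W a b)
          = Complex.I ^ (3 * K) • ((u : Matrix (QIdx m) (QIdx m) ℂ) * (Complex.I ^ k • W a b)) := by
            rw [pow_add, mul_smul, Matrix.mul_smul, Matrix.mul_smul]
        _ = Complex.I ^ (3 * K) • ((u : Matrix (QIdx m) (QIdx m) ℂ) * u) := by rw [← hu]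
        _ = Complex.I ^ (3 * K) • (Complex.I ^ K • (1 : Matrix (QIdx m) (QIdx m) ℂ)) := by rw [hsq]
        _ = 1 := by
            rw [smul_smul, ← pow_add]
            have : 3 * K + K = 4 * K := by ring
            rw [this, h4, one_smul]
    refine ⟨3 * K + k, a, b, ?_⟩
    have : ((u⁻¹ : (Matrix (QIdx m) (QIdx m) ℂ)ˣ) : Matrix (QIdx m) (QIdx m) ℂ)
        = ((u⁻¹ : (Matrix (QIdx m) (QIdx m) ℂ)ˣ) : Matrix (QIdx m) (QIdx m) ℂ) *
          ((u : Matrix (QIdx m) (QIdx m) ℂ) * (Complex.I ^ (3 * K + k) • W a b)) := by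
      rw [hmul, mul_one]
    rw [this, ← mul_assoc]
    norm_cast
    rw [inv_mul_cancel]
    simp

lemma pauli_le_PW : PauliGroup m ≤ PW m := by
  rw [PauliGroup]
  rw [Subgroup.closure_le]
  rintro u (h | h | ⟨i, (h | h | h)⟩)
  · exact ⟨2, 0, 0, by rw [h, W_zero_zero, pow_two, Complex.I_mul_I, neg_one_smul]⟩
  · exact ⟨1, 0, 0, by rw [h, W_zero_zero, pow_one]⟩
  · exact ⟨0, delta i, 0, by rw [h, Xop_eq, pow_zero, one_smul]⟩
  · exact ⟨1, delta i, delta i, by rw [h, Yop_eq]⟩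
  · exact ⟨0, 0, delta i, by rw [h, Zop_eq, pow_zero, one_smul]⟩

end Stab

namespace Stab

section Phi
variable {G : Type*} [Group G] {n : ℕ} (gens : Fin n → G)
  (hc : ∀ i j, Commute (gens i) (gens j))

noncomputable def phi (s : Fin n → ZMod 2) : G :=
  Finset.univ.noncommProd (fun i => gens i ^ (s i).val)
    (show ((Finset.univ : Finset (Fin n)) : Set (Fin n)).Pairwise
      (Function.onFun Commute fun i => gens i ^ (s i).val) from
      fun i _ j _ _ => Commute.pow_pow (hc i j) _ _)

lemma pow_sq_one {g : G} (h : g * g = 1) (a : ℕ) : g ^ a = g ^ (a % 2) := by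
  conv_lhs => rw [← Nat.div_add_mod a 2]
  rw [pow_add, pow_mul, pow_two, h, one_pow, one_mul]

lemma phi_add (hsq : ∀ i, gens i * gens i = 1) (s t : Fin n → ZMod 2) :
    phi gens hc (s + t) = phi gens hc s * phi gens hc t := by
  have hfg : ∀ i ∈ Finset.univ, gens i ^ (((s + t) i)).val
      = ((fun i => gens i ^ (s i).val) * (fun i => gens i ^ (t i).val)) i := fun i _ => by
    simp only [Pi.mul_apply, Pi.add_apply]
    rw [ZMod.val_add, ← pow_sq_one (hsq i), pow_add]
  calc phi gens hc (s + t)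
      = Finset.univ.noncommProd
          ((fun i => gens i ^ (s i).val) * (fun i => gens i ^ (t i).val))
          (Finset.noncommProd_mul_distrib_aux
            (fun i _ j _ _ => Commute.pow_pow (hc i j) _ _)
            (fun i _ j _ _ => Commute.pow_pow (hc i j) _ _)
            (fun i _ j _ _ => Commute.pow_pow (hc i j) _ _)) :=
        Finset.noncommProd_congr rfl hfg _
    _ = phi gens hc s * phi gens hc t :=
        Finset.noncommProd_mul_distrib _ _
          (fun i _ j _ _ => Commute.pow_pow (hc i j) _ _)
          (fun i _ j _ _ => Commute.pow_pow (hc i j) _ _)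
          (fun i _ j _ _ => Commute.pow_pow (hc i j) _ _)

lemma phi_zero : phi gens hc 0 = 1 := by
  rw [phi, Finset.noncommProd_eq_pow_card _ _ _ 1 (fun i _ => by simp), one_pow]

lemma phi_sq (hsq : ∀ i, gens i * gens i = 1) (s : Fin n → ZMod 2) : phi gens hc s * phi gens hc s = 1 := by
  rw [← phi_add gens hc hsq]
  have hss : s + s = 0 := by
    funext j
    have : ∀ a : ZMod 2, a + a = 0 := by decide
    exact this (s j)
  rw [hss, phi_zero]

lemma phi_single (i : Fin n) : phi gens hc (Pi.single i 1) = gens i := by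
  rw [phi]
  have h1 : (Finset.univ : Finset (Fin n))
      = insert i ((Finset.univ : Finset (Fin n)).erase i) :=
    (Finset.insert_erase (Finset.mem_univ i)).symm
  rw [Finset.noncommProd_congr h1 (fun x _ => rfl)]
  erw [Finset.noncommProd_insert_of_notMem _ _ _ _ (Finset.notMem_erase _ _)]
  rw [Finset.noncommProd_eq_pow_card _ _ _ 1 (fun j hj => by
      have hji : j ≠ i := (Finset.mem_erase.mp hj).1
      simp [Pi.single_eq_of_ne hji]), one_pow, mul_one]
  rw [Pi.single_eq_same, show (ZMod.val (1 : ZMod 2)) = 1 from rfl, pow_one]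

lemma phi_mem (H : Subgroup G) (s : Fin n → ZMod 2)
    (hs : ∀ i, s i ≠ 0 → gens i ∈ H) : phi gens hc s ∈ H := by
  refine Subgroup.noncommProd_mem _ _ (fun i _ => ?_)
  by_cases h : s i = 0
  · simp only [h, ZMod.val_zero, pow_zero]
    exact one_mem H
  · exact pow_mem (hs i h) _

lemma exists_phi (hsq : ∀ i, gens i * gens i = 1) {g : G} (hg : g ∈ Subgroup.closure (Set.range gens)) :
    ∃ s, phi gens hc s = g := by
  induction hg using Subgroup.closure_induction with
  | mem x hx =>
      obtain ⟨i, rfl⟩ := hx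
      exact ⟨Pi.single i 1, phi_single gens hc i⟩
  | one => exact ⟨0, phi_zero gens hc⟩
  | mul x y hx' hy' hx hy =>
      obtain ⟨s, rfl⟩ := hx
      obtain ⟨t, rfl⟩ := hy
      exact ⟨s + t, phi_add gens hc hsq s t⟩
  | inv x hx' hx =>
      obtain ⟨s, rfl⟩ := hx
      exact ⟨s, eq_inv_of_mul_eq_one_left (phi_sq gens hc hsq s)⟩

end Phi

variable {m : ℕ}

lemma trace_PW {u : (Matrix (QIdx m) (QIdx m) ℂ)ˣ} (hu : u ∈ PW m)
    (h2 : u * u = 1) (h1 : u ≠ 1) (hn : u ≠ -1) :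
    ((u : Matrix (QIdx m) (QIdx m) ℂ)).trace = 0 := by
  obtain ⟨k, a, b, hab⟩ := hu
  by_cases ha : a = 0
  · subst ha
    by_cases hb : b = 0
    · subst hb
      exfalso
      rw [W_zero_zero] at hab
      have hc : (u : Matrix (QIdx m) (QIdx m) ℂ) * u
          = (Complex.I ^ k * Complex.I ^ k) • 1 := by
        rw [hab, smul_mul_smul_comm, one_mul]
      have h2' : ((u * u : (Matrix (QIdx m) (QIdx m) ℂ)ˣ) : Matrix (QIdx m) (QIdx m) ℂ) = 1 := by
        rw [h2, Units.val_one]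
      rw [Units.val_mul, hc] at h2'
      have hx : Complex.I ^ k * Complex.I ^ k = 1 := by
        have h3 := congrFun (congrFun h2' (fun _ => 0)) (fun _ => 0)
        simpa [Matrix.smul_apply, Matrix.one_apply] using h3
      rcases mul_self_eq_one_iff.mp hx with h | h
      · exact h1 (Units.ext (by rw [hab, h, one_smul, Units.val_one]))
      · refine hn (Units.ext ?_)
        rw [hab, h, neg_one_smul]
        simp
    · rw [hab, Matrix.trace_smul, trace_W_right_ne hb, smul_zero]
  · rw [hab, Matrix.trace_smul, trace_W_left_ne ha, smul_zero]

end Stab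

theorem stabiliser_codespace_dimension (m n : ℕ)
    (gens : Fin n → (Matrix (QIdx m) (QIdx m) ℂ)ˣ)
    (hpauli : ∀ i, gens i ∈ PauliGroup m)
    (hcomm : ∀ i j, gens i * gens j = gens j * gens i)
    (hsa : ∀ i, ((gens i : Matrix (QIdx m) (QIdx m) ℂ))ᴴ = gens i)
    (hsq : ∀ i, gens i * gens i = 1)
    (hneg : (-1 : (Matrix (QIdx m) (QIdx m) ℂ)ˣ) ∉ Subgroup.closure (Set.range gens))
    (hindep : ∀ i : Fin n,
      gens i ∉ Subgroup.closure (gens '' {j | j ≠ i})) :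
    Module.finrank ℂ
      ↥(⨅ g ∈ Subgroup.closure (Set.range gens),
          LinearMap.eqLocus ((g : Matrix (QIdx m) (QIdx m) ℂ)).mulVecLin LinearMap.id)
      = 2 ^ (m - n) := by
  classical
  have hc : ∀ i j, Commute (gens i) (gens j) := fun i j => hcomm i j
  set S := Subgroup.closure (Set.range gens) with hSdef
  set Φ : (Fin n → ZMod 2) → (Matrix (QIdx m) (QIdx m) ℂ)ˣ := Stab.phi gens hc with hPhi
  have hone : ∀ a : ZMod 2, a ≠ 0 → a = 1 := by decide
  -- independence: Φ s = 1 → s = 0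
  have hphi_ne : ∀ s : Fin n → ZMod 2, s ≠ 0 → Φ s ≠ 1 := by
    intro s hs h1
    obtain ⟨i, hi⟩ : ∃ i, s i ≠ 0 := by
      by_contra h; push_neg at h; exact hs (funext h)
    apply hindep i
    set s' : Fin n → ZMod 2 := s + Pi.single i 1 with hs'
    have hs'i : s' i = 0 := by
      rw [hs']
      simp only [Pi.add_apply, Pi.single_eq_same, hone (s i) hi]
      decide
    have hsplit : Φ s' = gens i := by
      rw [hPhi, hs', Stab.phi_add gens hc hsq, Stab.phi_single gens hc i, ← hPhi, h1, one_mul]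
    rw [← hsplit, hPhi]
    refine Stab.phi_mem gens hc _ s' (fun j hj => ?_)
    rcases eq_or_ne j i with rfl | hji
    · exact absurd hs'i hj
    · exact Subgroup.subset_closure ⟨j, hji, rfl⟩
  have hΦS : ∀ s, Φ s ∈ S := fun s =>
    Stab.phi_mem gens hc S s (fun i _ => Subgroup.subset_closure ⟨i, rfl⟩)
  have hSPW : S ≤ Stab.PW m := by
    refine le_trans ?_ Stab.pauli_le_PW
    rw [hSdef, Subgroup.closure_le]
    rintro _ ⟨i, rfl⟩
    exact hpauli i
  have htr : ∀ s : Fin n → ZMod 2, s ≠ 0 →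
      ((Φ s : (Matrix (QIdx m) (QIdx m) ℂ)ˣ) : Matrix (QIdx m) (QIdx m) ℂ).trace = 0 := by
    intro s hs
    refine Stab.trace_PW (hSPW (hΦS s)) ?_ (hphi_ne s hs) ?_
    · exact Stab.phi_sq gens hc hsq s
    · intro h
      exact hneg (h ▸ hΦS s)
  -- the projector
  set P : Matrix (QIdx m) (QIdx m) ℂ :=
    ((2:ℂ)^n)⁻¹ • ∑ s : Fin n → ZMod 2, ((Φ s : (Matrix (QIdx m) (QIdx m) ℂ)ˣ) :
      Matrix (QIdx m) (QIdx m) ℂ) with hP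
  set C := ⨅ g ∈ S, LinearMap.eqLocus ((g : Matrix (QIdx m) (QIdx m) ℂ)).mulVecLin
    LinearMap.id with hC
  have hmemC : ∀ v, v ∈ C ↔ ∀ g ∈ S,
      ((g : (Matrix (QIdx m) (QIdx m) ℂ)ˣ) : Matrix (QIdx m) (QIdx m) ℂ).mulVecLin v = v := by
    intro v
    rw [hC]
    simp only [Submodule.mem_iInf, LinearMap.mem_eqLocus, LinearMap.id_apply]
  have hgP : ∀ g ∈ S, ((g : (Matrix (QIdx m) (QIdx m) ℂ)ˣ) : Matrix (QIdx m) (QIdx m) ℂ) * P = P := by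
    intro g hg
    obtain ⟨s0, rfl⟩ := Stab.exists_phi gens hc hsq hg
    rw [hP, Matrix.mul_smul, Finset.mul_sum]
    congr 1
    refine Fintype.sum_equiv (Equiv.addLeft s0) _ _ (fun s => ?_)
    rw [← Units.val_mul, ← Stab.phi_add gens hc hsq]
    simp [Equiv.coe_addLeft]
    rfl
  have hsumv : ∀ (f : (Fin n → ZMod 2) → Matrix (QIdx m) (QIdx m) ℂ) (v : QIdx m → ℂ),
      (∑ s, f s) *ᵥ v = ∑ s, f s *ᵥ v := by
    intro f v
    ext x
    simp only [Matrix.mulVec, dotProduct, Finset.sum_apply, Matrix.sum_apply,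
      Finset.sum_mul]
    rw [Finset.sum_comm]
  have hcard : Fintype.card (Fin n → ZMod 2) = 2^n := by
    simp [Fintype.card_fun]
  have hPv : ∀ v ∈ C, P.mulVecLin v = v := by
    intro v hv
    rw [Matrix.mulVecLin_apply, hP, Matrix.smul_mulVec, hsumv]
    have : ∀ s : Fin n → ZMod 2,
        ((Φ s : (Matrix (QIdx m) (QIdx m) ℂ)ˣ) : Matrix (QIdx m) (QIdx m) ℂ) *ᵥ v = v := by
      intro s
      have := (hmemC v).mp hv _ (hΦS s)
      rwa [Matrix.mulVecLin_apply] at this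
    rw [Finset.sum_congr rfl (fun s _ => this s), Finset.sum_const, Finset.card_univ, hcard]
    rw [← Nat.cast_smul_eq_nsmul ℂ, smul_smul, Nat.cast_pow, Nat.cast_ofNat,
      inv_mul_cancel₀ (pow_ne_zero n (two_ne_zero : (2:ℂ) ≠ 0)), one_smul]
  have hproj : LinearMap.IsProj C P.mulVecLin := by
    refine ⟨fun v => ?_, hPv⟩
    rw [hmemC]
    intro g hg
    have h1 : ((g : (Matrix (QIdx m) (QIdx m) ℂ)ˣ) : Matrix (QIdx m) (QIdx m) ℂ).mulVecLin
        (P.mulVecLin v) = ((((g : (Matrix (QIdx m) (QIdx m) ℂ)ˣ) :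
          Matrix (QIdx m) (QIdx m) ℂ) * P).mulVecLin) v := by
      rw [Matrix.mulVecLin_mul]; rfl
    rw [h1, hgP g hg]
  have htraceP : P.trace = ((2:ℂ)^m) * ((2:ℂ)^n)⁻¹ := by
    rw [hP, Matrix.trace_smul, Matrix.trace_sum]
    rw [Finset.sum_eq_single 0 (fun s _ hs => htr s hs)
      (fun h => absurd (Finset.mem_univ 0) h)]
    have h0 : Φ 0 = 1 := Stab.phi_zero gens hc
    rw [h0, Units.val_one, Stab.trace_one', smul_eq_mul, mul_comm]
  have htraceL : LinearMap.trace ℂ (QIdx m → ℂ) P.mulVecLin = (2:ℂ)^m * ((2:ℂ)^n)⁻¹ := by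
    rw [← Matrix.toLin'_apply', LinearMap.trace_eq_matrix_trace ℂ (Pi.basisFun ℂ (QIdx m)),
      LinearMap.toMatrix_eq_toMatrix', LinearMap.toMatrix'_toLin', htraceP]
  have hfr := hproj.trace
  rw [htraceL] at hfr
  set r := Module.finrank ℂ C with hr
  have hrc : (r : ℂ) * 2^n = 2^m := by
    rw [← hfr]
    field_simp
  have hrn : r * 2^n = 2^m := by
    have hcast : ((r * 2^n : ℕ) : ℂ) = ((2^m : ℕ) : ℂ) := by
      push_cast
      exact hrc
    exact_mod_cast hcast
  have hr0 : r ≠ 0 := by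
    intro h
    rw [h, zero_mul] at hrn
    have : 0 < 2^m := Nat.pow_pos (n := m) (by norm_num)
    omega
  have hnm : n ≤ m := by
    have h1 : 2^n ≤ 2^m := by
      calc 2^n ≤ r * 2^n := Nat.le_mul_of_pos_left _ (Nat.pos_of_ne_zero hr0)
        _ = 2^m := hrn
    exact (Nat.pow_le_pow_iff_right (by norm_num)).mp h1
  have hfin : r * 2^n = 2^(m-n) * 2^n := by
    rw [hrn, ← pow_add, Nat.sub_add_cancel hnm]
  exact Nat.eq_of_mul_eq_mul_right (Nat.pow_pos (n := n) (by norm_num)) hfin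
end

section
/- Let (T, C, D, ν): (H₁,S₁) → (H₂,S₂) and (T′, C′, D′, ν′): (H₂,S₂) → (H₃,S₃) be corrections of stabiliser codes. Then the data T″ = T ∘ T′, C″ = ⟨C, ν⁻¹(C′)⟩, D″ = ν⁻¹(D′) and ν″ = ν′ ∘ (ν restricted to D″) is a correction (H₁,S₁) → (H₃,S₃); in particular ⟨C″, D″⟩ = S₁ and T″ induces an isomorphism H₃ ≅ H₁^{C″}. -/
open scoped InnerProductSpace

/-- Composition of corrections of stabiliser codes. A stabiliser code is a pair `(H, S)` of a
finite-dimensional complex Hilbert space `H` and a subgroup `S` of its unitary group; a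
correction `(H₁,S₁) → (H₂,S₂)` is data `(T, C, D, ν)` as in the hypotheses below. The composite
data `(T ∘ T', ⟨C, ν⁻¹(C')⟩, ν⁻¹(D'), ν' ∘ ν)` is again a correction: in particular
`⟨C″, D″⟩ = S₁`, the image of `T ∘ T'` consists of `C″`-invariant vectors, `T ∘ T'` induces an
isomorphism of `H₃` onto `H₁^{C″}`, and conjugation by it carries `ν″(d)` to `d`. -/
theorem correction_composition
    {H1 H2 H3 : Type*}
    [NormedAddCommGroup H1] [InnerProductSpace ℂ H1] [FiniteDimensional ℂ H1]
    [NormedAddCommGroup H2] [InnerProductSpace ℂ H2] [FiniteDimensional ℂ H2]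
    [NormedAddCommGroup H3] [InnerProductSpace ℂ H3] [FiniteDimensional ℂ H3]
    (S1 : Subgroup (unitary (H1 →L[ℂ] H1)))
    (S2 : Subgroup (unitary (H2 →L[ℂ] H2)))
    (S3 : Subgroup (unitary (H3 →L[ℂ] H3)))
    -- the first correction (T, C, D, ν) : (H1,S1) → (H2,S2)
    (T : H2 →ₗᵢ[ℂ] H1)
    (C D : Subgroup (unitary (H1 →L[ℂ] H1)))
    (hC : C ≤ S1) (hD : D ≤ S1) (hCD : C ⊔ D = S1)
    (ν : D ≃* S2)
    (hTC : ∀ g ∈ C, ∀ x : H2, ((g : unitary (H1 →L[ℂ] H1)) : H1 →L[ℂ] H1) (T x) = T x)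
    (hTsurj : ∀ y : H1,
      (∀ g ∈ C, ((g : unitary (H1 →L[ℂ] H1)) : H1 →L[ℂ] H1) y = y) → ∃ x : H2, T x = y)
    (hTν : ∀ (d : D) (x : H2),
      (((d : unitary (H1 →L[ℂ] H1))) : H1 →L[ℂ] H1) (T x)
        = T ((((ν d : S2) : unitary (H2 →L[ℂ] H2)) : H2 →L[ℂ] H2) x))
    -- the second correction (T', C', D', ν') : (H2,S2) → (H3,S3)
    (T' : H3 →ₗᵢ[ℂ] H2)
    (C' D' : Subgroup (unitary (H2 →L[ℂ] H2)))
    (hC' : C' ≤ S2) (hD' : D' ≤ S2) (hCD' : C' ⊔ D' = S2)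
    (ν' : D' ≃* S3)
    (hTC' : ∀ g ∈ C', ∀ x : H3, ((g : unitary (H2 →L[ℂ] H2)) : H2 →L[ℂ] H2) (T' x) = T' x)
    (hTsurj' : ∀ y : H2,
      (∀ g ∈ C', ((g : unitary (H2 →L[ℂ] H2)) : H2 →L[ℂ] H2) y = y) → ∃ x : H3, T' x = y)
    (hTν' : ∀ (d : D') (x : H3),
      (((d : unitary (H2 →L[ℂ] H2))) : H2 →L[ℂ] H2) (T' x)
        = T' ((((ν' d : S3) : unitary (H3 →L[ℂ] H3)) : H3 →L[ℂ] H3) x)) :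
    -- the composite data (T ∘ T', C″ = ⟨C, ν⁻¹(C')⟩, D″ = ν⁻¹(D'), ν″ = ν' ∘ ν) is a correction
    ((C ⊔ Subgroup.map D.subtype (Subgroup.comap (S2.subtype.comp ν.toMonoidHom) C')) ⊔
        Subgroup.map D.subtype (Subgroup.comap (S2.subtype.comp ν.toMonoidHom) D') = S1) ∧
    (∀ g ∈ C ⊔ Subgroup.map D.subtype (Subgroup.comap (S2.subtype.comp ν.toMonoidHom) C'),
      ∀ x : H3, ((g : unitary (H1 →L[ℂ] H1)) : H1 →L[ℂ] H1) (T (T' x)) = T (T' x)) ∧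
    (∀ y : H1,
      (∀ g ∈ C ⊔ Subgroup.map D.subtype (Subgroup.comap (S2.subtype.comp ν.toMonoidHom) C'),
        ((g : unitary (H1 →L[ℂ] H1)) : H1 →L[ℂ] H1) y = y) →
      ∃ x : H3, T (T' x) = y) ∧
    (∀ (d : D) (hd : (S2.subtype.comp ν.toMonoidHom) d ∈ D') (x : H3),
      ((d : unitary (H1 →L[ℂ] H1)) : H1 →L[ℂ] H1) (T (T' x))
        = T (T' ((((ν' ⟨(S2.subtype.comp ν.toMonoidHom) d, hd⟩ : S3) :
              unitary (H3 →L[ℂ] H3)) : H3 →L[ℂ] H3) x))) := by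
  set φ : D →* unitary (H2 →L[ℂ] H2) := S2.subtype.comp ν.toMonoidHom with hφ
  have hφinj : Function.Injective φ := by
    exact S2.subtype_injective.comp ν.injective
  have hφmem : ∀ (d : D), φ d = ((ν d : S2) : unitary (H2 →L[ℂ] H2)) := fun d => rfl
  -- the key sup computation
  have hsup : Subgroup.comap φ C' ⊔ Subgroup.comap φ D' = ⊤ := by
    rw [eq_top_iff]
    intro d _
    have h1 : Subgroup.map φ (Subgroup.comap φ C' ⊔ Subgroup.comap φ D') = S2 := by
      rw [Subgroup.map_sup, Subgroup.map_comap_eq, Subgroup.map_comap_eq]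
      have hr : φ.range = S2 := by
        apply le_antisymm
        · rintro g ⟨d, rfl⟩; exact (ν d).2
        · intro g hg
          exact ⟨ν.symm ⟨g, hg⟩, by simp [hφmem]⟩
      rw [hr, inf_of_le_right hC', inf_of_le_right hD', hCD']
    have h2 : φ d ∈ Subgroup.map φ (Subgroup.comap φ C' ⊔ Subgroup.comap φ D') := by
      rw [h1]; exact (ν d).2
    obtain ⟨z, hz, he⟩ := h2
    rwa [hφinj he] at hz
  refine ⟨?_, ?_, ?_, ?_⟩
  · rw [sup_assoc, ← Subgroup.map_sup, hsup, ← MonoidHom.range_eq_map, D.range_subtype, hCD]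
  · -- invariance
    intro g hg x
    let K : Subgroup (unitary (H1 →L[ℂ] H1)) :=
      { carrier := {g | ∀ z : H3,
            ((g : unitary (H1 →L[ℂ] H1)) : H1 →L[ℂ] H1) (T (T' z)) = T (T' z)}
        one_mem' := fun z => rfl
        mul_mem' := fun {a b} ha hb z => by
          have : ((↑(a * b) : H1 →L[ℂ] H1)) (T (T' z))
              = (↑a : H1 →L[ℂ] H1) ((↑b : H1 →L[ℂ] H1) (T (T' z))) := rfl
          rw [this, hb, ha]
        inv_mem' := fun {a} ha z => by
          conv_lhs => rw [← ha z]
          have : ((↑(a⁻¹) : H1 →L[ℂ] H1)) ((↑a : H1 →L[ℂ] H1) (T (T' z)))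
              = ((↑(a⁻¹ * a) : H1 →L[ℂ] H1)) (T (T' z)) := rfl
          rw [this, inv_mul_cancel]
          rfl }
    have hle : C ⊔ Subgroup.map D.subtype (Subgroup.comap φ C') ≤ K := by
      apply sup_le
      · intro g hg z
        exact hTC g hg (T' z)
      · rintro g ⟨d, hd, rfl⟩ z
        show ((d : unitary (H1 →L[ℂ] H1)) : H1 →L[ℂ] H1) (T (T' z)) = T (T' z)
        rw [hTν d (T' z)]
        exact congrArg T (hTC' _ hd z)
    exact hle hg x
  · -- surjectivity
    intro y hy
    have hyC : ∀ g ∈ C, ((g : unitary (H1 →L[ℂ] H1)) : H1 →L[ℂ] H1) y = y := fun g hg =>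
      hy g (Subgroup.mem_sup_left hg)
    obtain ⟨x2, hx2⟩ := hTsurj y hyC
    have hx2fix : ∀ g ∈ C', ((g : unitary (H2 →L[ℂ] H2)) : H2 →L[ℂ] H2) x2 = x2 := by
      intro g hg
      set d : D := ν.symm ⟨g, hC' hg⟩ with hd
      have hνd : ((ν d : S2) : unitary (H2 →L[ℂ] H2)) = g := by simp [hd]
      have hdm : d ∈ Subgroup.comap φ C' := by
        simp only [Subgroup.mem_comap, hφmem, hνd]; exact hg
      have hdfix : ((d : unitary (H1 →L[ℂ] H1)) : H1 →L[ℂ] H1) y = y :=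
        hy _ (Subgroup.mem_sup_right ⟨d, hdm, rfl⟩)
      have := hTν d x2
      rw [hx2, hdfix, hνd] at this
      exact T.injective (this.symm.trans hx2.symm)
    obtain ⟨x3, hx3⟩ := hTsurj' x2 hx2fix
    exact ⟨x3, by rw [hx3, hx2]⟩
  · -- intertwining
    intro d hd x
    rw [hTν d (T' x)]
    exact congrArg T (hTν' ⟨φ d, hd⟩ x)
end
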